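/- Let X ⊆ ℝⁿ be a convex cone with dual cone X* := {u ∈ ℝⁿ : ⟨u,x⟩ ≥ 0 for all x ∈ X}, let ω : ℝⁿ → ℝᵐ be continuous, let y ∈ ℝᵐ, and let x be a point of the interior of X with ω(x) < y componentwise and 0 < ∫_{X*} e^{−⟨x,μ⟩} dμ < ∞. Set Z := ℝᵐ₊ and Δ(x) := ln ∫_{X*} e^{−⟨x,μ⟩} dμ. Then: (i) sup_{(λ,μ) ∈ Z × X*} (⟨λ, ω(x) − y⟩ − ⟨μ, x⟩) = 0; (ii) for every p ∈ ℕ, (1/p)·ln ∫_{Z × X*} e^{p(⟨λ, ω(x)−y⟩ − ⟨μ,x⟩)} d(λ,μ) = (1/p)·[Δ(x) − Σ_{j=1}^m ln(y − ω(x))_j − (m+n)·ln p]; and (iii) consequently lim_{p→∞} (1/p)·ln ∫_{Z × X*} e^{p(⟨λ, ω(x)−y⟩ − ⟨μ,x⟩)} d(λ,μ) = 0 = lim_{p→∞} (1/p)·[Δ(x) − Σ_{j=1}^m ln(y − ω(x))_j]. -/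

import Mathlib

open MeasureTheory Pointwise Filter Topology

/-- For a convex cone `X ⊆ ℝⁿ` with dual cone `X*`, a continuous
`ω : ℝⁿ → ℝᵐ`, `y ∈ ℝᵐ`, and `x ∈ int X` with `ω(x) < y` componentwise and
`0 < ∫_{X*} e^{-⟨x,μ⟩} dμ < ∞`, setting `Z := ℝᵐ₊` and `Δ(x) := ln ∫_{X*} e^{-⟨x,μ⟩} dμ`:
(i) `sup_{(λ,μ) ∈ Z × X*} (⟨λ, ω(x)-y⟩ - ⟨μ,x⟩) = 0`;
(ii) for every `p ∈ ℕ`, `p ≥ 1`,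
`(1/p) ln ∫_{Z × X*} e^{p(⟨λ,ω(x)-y⟩-⟨μ,x⟩)} = (1/p)(Δ(x) - Σⱼ ln(y-ω(x))ⱼ - (m+n) ln p)`;
(iii) both sequences tend to `0` as `p → ∞`. -/
theorem lbf_laplace_approx (n m : ℕ) (X : Set (Fin n → ℝ))
    (hXconv : Convex ℝ X) (hXcone : ∀ t : ℝ, 0 < t → t • X = X)
    (ω : (Fin n → ℝ) → (Fin m → ℝ)) (hω : Continuous ω)
    (y : Fin m → ℝ) (x : Fin n → ℝ) (hx : x ∈ interior X)
    (hxy : ∀ j, ω x j < y j)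
    (Xstar : Set (Fin n → ℝ))
    (hXstar : Xstar = {u | ∀ v ∈ X, 0 ≤ ∑ i, u i * v i})
    (Z : Set (Fin m → ℝ)) (hZ : Z = {l | 0 ≤ l})
    (hint : IntegrableOn (fun μ => Real.exp (-(∑ i, x i * μ i))) Xstar volume)
    (hpos : 0 < ∫ μ in Xstar, Real.exp (-(∑ i, x i * μ i)))
    (Δ : ℝ) (hΔ : Δ = Real.log (∫ μ in Xstar, Real.exp (-(∑ i, x i * μ i)))) :
    (⨆ l ∈ Z, ⨆ μ ∈ Xstar,
        (((∑ j, l j * (ω x j - y j)) - ∑ i, μ i * x i : ℝ) : EReal)) = 0 ∧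
    (∀ p : ℕ, 1 ≤ p →
      (1 / (p : ℝ)) * Real.log (∫ q in Z ×ˢ Xstar,
          Real.exp ((p : ℝ) * ((∑ j, q.1 j * (ω x j - y j)) - ∑ i, q.2 i * x i))) =
        (1 / (p : ℝ)) * (Δ - (∑ j, Real.log (y j - ω x j)) - (m + n) * Real.log p)) ∧
    Tendsto (fun p : ℕ => (1 / (p : ℝ)) * Real.log (∫ q in Z ×ˢ Xstar,
          Real.exp ((p : ℝ) * ((∑ j, q.1 j * (ω x j - y j)) - ∑ i, q.2 i * x i))))
      atTop (𝓝 0) ∧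
    Tendsto (fun p : ℕ => (1 / (p : ℝ)) * (Δ - ∑ j, Real.log (y j - ω x j)))
      atTop (𝓝 0) := by
  have hxX : x ∈ X := interior_subset hx
  have hdpos : ∀ j, 0 < y j - ω x j := fun j => sub_pos.2 (hxy j)
  set A : ℝ := ∫ μ in Xstar, Real.exp (-(∑ i, x i * μ i)) with hAdef
  -- basic membership facts
  have h0Z : (0 : Fin m → ℝ) ∈ Z := by rw [hZ]; show (0 : Fin m → ℝ) ≤ 0; exact le_refl _
  have h0X : (0 : Fin n → ℝ) ∈ Xstar := by rw [hXstar]; intro v hv; simp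
  have hμx : ∀ μ ∈ Xstar, 0 ≤ ∑ i, μ i * x i := by
    intro μ hμ; rw [hXstar] at hμ; exact hμ x hxX
  -- Z as a pi set
  have hZ_eq : Z = Set.univ.pi fun _ : Fin m => Set.Ici (0:ℝ) := by
    rw [hZ]; ext l; simp [Pi.le_def]
  have hZmeas : MeasurableSet Z := by
    rw [hZ_eq]; exact MeasurableSet.univ_pi fun _ => measurableSet_Ici
  -- Xstar is a cone
  have hXsub : ∀ c : ℝ, 0 < c → ∀ μ ∈ Xstar, c • μ ∈ Xstar := by
    intro c hc μ hμ
    rw [hXstar] at hμ ⊢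
    intro v hv
    have h1 : 0 ≤ c * ∑ i, μ i * v i := mul_nonneg hc.le (hμ v hv)
    calc (0:ℝ) ≤ c * ∑ i, μ i * v i := h1
    _ = ∑ i, (c • μ) i * v i := by
        rw [Finset.mul_sum]; exact Finset.sum_congr rfl fun i _ => by simp [Pi.smul_apply]; ring
  have hXsmul : ∀ c : ℝ, 0 < c → c • Xstar = Xstar := by
    intro c hc
    apply Set.Subset.antisymm
    · rintro _ ⟨μ, hμ, rfl⟩; exact hXsub c hc μ hμ
    · intro μ hμ
      refine ⟨c⁻¹ • μ, hXsub c⁻¹ (inv_pos.2 hc) μ hμ, ?_⟩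
      show c • (c⁻¹ • μ) = μ
      rw [smul_smul, mul_inv_cancel₀ hc.ne', one_smul]
  -- Step B: scaling on Xstar
  have hB : ∀ c : ℝ, 0 < c →
      ∫ μ in Xstar, Real.exp (-(c * ∑ i, μ i * x i)) = (c ^ n)⁻¹ * A := by
    intro c hc
    have h := MeasureTheory.Measure.setIntegral_comp_smul_of_pos
      (μ := (volume : Measure (Fin n → ℝ)))
      (fun ν => Real.exp (-(∑ i, x i * ν i))) Xstar hc
    rw [hXsmul c hc, Module.finrank_fin_fun] at h
    have hfun : ∀ μ : Fin n → ℝ, (∑ i, x i * (c • μ) i) = c * ∑ i, μ i * x i := by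
      intro μ
      rw [Finset.mul_sum]
      exact Finset.sum_congr rfl fun i _ => by simp [Pi.smul_apply]; ring
    simp only [hfun, smul_eq_mul] at h
    exact h
  -- Step C: product integral on Z
  have hC : ∀ c : ℝ, 0 < c →
      ∫ l in Z, Real.exp (c * ∑ j, l j * (ω x j - y j)) = ∏ j, (c * (y j - ω x j))⁻¹ := by
    intro c hc
    have h1 : ∀ l : Fin m → ℝ, Real.exp (c * ∑ j, l j * (ω x j - y j))
        = ∏ j, Real.exp (-(c * (y j - ω x j) * l j)) := by
      intro l
      rw [← Real.exp_sum]
      congr 1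
      rw [Finset.mul_sum]
      exact Finset.sum_congr rfl fun j _ => by ring
    simp_rw [h1]
    rw [← integral_indicator hZmeas]
    have h2 : (Z.indicator fun l => ∏ j, Real.exp (-(c * (y j - ω x j) * l j)))
        = fun l => ∏ j, (Set.Ici (0:ℝ)).indicator
            (fun t => Real.exp (-(c * (y j - ω x j) * t))) (l j) := by
      funext l
      by_cases hl : l ∈ Z
      · rw [Set.indicator_of_mem hl]
        have hm : ∀ j, l j ∈ Set.Ici (0:ℝ) := by
          rw [hZ_eq, Set.mem_univ_pi] at hl; exact hl
        refine Finset.prod_congr rfl fun j _ => ?_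
        rw [Set.indicator_of_mem (hm j)]
      · rw [Set.indicator_of_notMem hl]
        rw [hZ_eq, Set.mem_univ_pi] at hl
        push_neg at hl
        obtain ⟨j, hj⟩ := hl
        symm
        apply Finset.prod_eq_zero (Finset.mem_univ j)
        rw [Set.indicator_of_notMem hj]
    rw [h2, MeasureTheory.integral_fintype_prod_volume_eq_prod
      (f := fun j t => (Set.Ici (0:ℝ)).indicator
        (fun t => Real.exp (-(c * (y j - ω x j) * t))) t)]
    refine Finset.prod_congr rfl fun j _ => ?_
    rw [integral_indicator measurableSet_Ici, integral_Ici_eq_integral_Ioi]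
    have hb : 0 < c * (y j - ω x j) := mul_pos hc (hdpos j)
    have h := integral_comp_mul_left_Ioi (fun s => Real.exp (-s)) 0 hb
    simp only [mul_zero, integral_exp_neg_Ioi, neg_zero, Real.exp_zero, smul_eq_mul,
      mul_one] at h
    exact h
  -- combined integral value
  have key : ∀ p : ℕ, 1 ≤ p → (∫ q in Z ×ˢ Xstar,
        Real.exp ((p:ℝ) * ((∑ j, q.1 j * (ω x j - y j)) - ∑ i, q.2 i * x i)))
      = (∏ j, ((p:ℝ) * (y j - ω x j))⁻¹) * (((p:ℝ) ^ n)⁻¹ * A) := by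
    intro p hp
    have hc : (0:ℝ) < p := by exact_mod_cast hp.trans_lt' zero_lt_one
    have h1 : ∀ q : (Fin m → ℝ) × (Fin n → ℝ),
        Real.exp ((p:ℝ) * ((∑ j, q.1 j * (ω x j - y j)) - ∑ i, q.2 i * x i))
        = Real.exp ((p:ℝ) * ∑ j, q.1 j * (ω x j - y j))
          * Real.exp (-((p:ℝ) * ∑ i, q.2 i * x i)) := by
      intro q; rw [← Real.exp_add]; congr 1; ring
    simp_rw [h1]
    rw [MeasureTheory.Measure.volume_eq_prod]
    rw [setIntegral_prod_mul (fun l => Real.exp ((p:ℝ) * ∑ j, l j * (ω x j - y j)))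
      (fun μ => Real.exp (-((p:ℝ) * ∑ i, μ i * x i))) Z Xstar, hC _ hc, hB _ hc]
  -- part (ii)
  have part2 : ∀ p : ℕ, 1 ≤ p →
      (1 / (p : ℝ)) * Real.log (∫ q in Z ×ˢ Xstar,
          Real.exp ((p : ℝ) * ((∑ j, q.1 j * (ω x j - y j)) - ∑ i, q.2 i * x i))) =
        (1 / (p : ℝ)) * (Δ - (∑ j, Real.log (y j - ω x j)) - (m + n) * Real.log p) := by
    intro p hp
    have hc : (0:ℝ) < p := by exact_mod_cast hp.trans_lt' zero_lt_one
    rw [key p hp]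
    congr 1
    have hprodpos : ∀ j ∈ Finset.univ, ((p:ℝ) * (y j - ω x j))⁻¹ ≠ 0 :=
      fun j _ => (inv_pos.2 (mul_pos hc (hdpos j))).ne'
    have hprodpos' : (0:ℝ) < ∏ j, ((p:ℝ) * (y j - ω x j))⁻¹ :=
      Finset.prod_pos fun j _ => inv_pos.2 (mul_pos hc (hdpos j))
    have h2pos : (0:ℝ) < ((p:ℝ) ^ n)⁻¹ * A := mul_pos (inv_pos.2 (pow_pos hc n)) hpos
    rw [Real.log_mul hprodpos'.ne' h2pos.ne',
      Real.log_prod hprodpos,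
      Real.log_mul (inv_pos.2 (pow_pos hc n)).ne' hpos.ne', Real.log_inv, Real.log_pow]
    have h3 : ∀ j ∈ Finset.univ, Real.log (((p:ℝ) * (y j - ω x j))⁻¹)
        = -(Real.log p + Real.log (y j - ω x j)) := by
      intro j _
      rw [Real.log_inv, Real.log_mul hc.ne' (hdpos j).ne']
    rw [Finset.sum_congr rfl h3, hΔ]
    simp only [Finset.sum_neg_distrib, Finset.sum_add_distrib, Finset.sum_const,
      Finset.card_univ, Fintype.card_fin, nsmul_eq_mul, ← hAdef]
    ring
  refine ⟨?_, part2, ?_, ?_⟩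
  -- part (i)
  · apply le_antisymm
    · refine iSup₂_le fun l hl => iSup₂_le fun μ hμ => ?_
      have hl' : 0 ≤ l := by rwa [hZ] at hl
      have hs1 : (∑ j, l j * (ω x j - y j)) ≤ 0 :=
        Finset.sum_nonpos fun j _ =>
          mul_nonpos_of_nonneg_of_nonpos (hl' j) (sub_nonpos.2 (hxy j).le)
      have hs2 : 0 ≤ ∑ i, μ i * x i := hμx μ hμ
      have : ((∑ j, l j * (ω x j - y j)) - ∑ i, μ i * x i : ℝ) ≤ 0 := by linarith
      have h' : ((((∑ j, l j * (ω x j - y j)) - ∑ i, μ i * x i : ℝ)) : EReal) ≤ ((0:ℝ) : EReal) :=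
        EReal.coe_le_coe_iff.2 this
      simpa using h'
    · have h0 : ((0:ℝ) : EReal) ≤ ⨆ l ∈ Z, ⨆ μ ∈ Xstar,
          (((∑ j, l j * (ω x j - y j)) - ∑ i, μ i * x i : ℝ) : EReal) := by
        refine le_iSup₂_of_le 0 h0Z (le_iSup₂_of_le 0 h0X ?_)
        simp
      simpa using h0
  -- part (iii), first limit
  · have t1 : Tendsto (fun p : ℕ => (1:ℝ)/p) atTop (𝓝 0) := tendsto_one_div_atTop_nhds_zero_nat
    have t2 : Tendsto (fun p : ℕ => Real.log p / p) atTop (𝓝 0) :=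
      (Real.isLittleO_log_id_atTop.tendsto_div_nhds_zero).comp tendsto_natCast_atTop_atTop
    have t3 : Tendsto (fun p : ℕ => (1 / (p:ℝ)) *
        (Δ - (∑ j, Real.log (y j - ω x j)) - (m + n) * Real.log p)) atTop (𝓝 0) := by
      have := (t1.mul_const (Δ - ∑ j, Real.log (y j - ω x j))).sub
        (t2.const_mul ((m:ℝ) + n))
      simp only [zero_mul, mul_zero, sub_zero] at this
      refine this.congr fun p => ?_
      field_simp
    refine Tendsto.congr' ?_ t3
    filter_upwards [eventually_ge_atTop 1] with p hp
    exact (part2 p hp).symm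
  -- part (iii), second limit
  · have t1 : Tendsto (fun p : ℕ => (1:ℝ)/p) atTop (𝓝 0) := tendsto_one_div_atTop_nhds_zero_nat
    have := t1.mul_const (Δ - ∑ j, Real.log (y j - ω x j))
    simpa using this
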